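/- Let Λ be a left hereditary ring such that every left Λ-module decomposes as the direct sum of a stable module and a projective module. Then such decompositions are unique up to isomorphism: if M ≅ S ⊕ P ≅ S' ⊕ P' with S, S' stable and P, P' projective, then there is an isomorphism S ≅ S' compatible with the canonical embeddings and an isomorphism P ≅ P' compatible with the canonical projections. -/

import Mathlib

universe u

/-- A module is *stable* if it has no nonzero projective direct summand. -/
def IsStableModule (Λ : Type u) [Ring Λ] (M : Type u) [AddCommGroup M] [Module Λ M] : Prop :=
  ∀ p : Submodule Λ M, Module.Projective Λ p → (∃ q, IsCompl p q) → p = ⊥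

/-- Over a left hereditary ring, a stable module admits no nonzero map to the ring. -/
lemma stable_hom_to_ring_eq_zero {Λ : Type u} [Ring Λ]
    (hHered : ∀ I : Ideal Λ, Module.Projective Λ I)
    {N : Type u} [AddCommGroup N] [Module Λ N] (hN : IsStableModule Λ N)
    (f : N →ₗ[Λ] Λ) : f = 0 := by
  haveI hI : Module.Projective Λ (LinearMap.range f) := hHered (LinearMap.range f)
  obtain ⟨g, hg⟩ := Module.projective_lifting_property (f.rangeRestrict)
    (LinearMap.id (R := Λ) (M := LinearMap.range f)) f.surjective_rangeRestrict
  have hgsec : ∀ y : LinearMap.range f, f.rangeRestrict (g y) = y := fun y => by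
    have := congrArg (fun h => h y) hg; exact this
  have hginj : Function.Injective g := by
    intro a b hab
    have := hgsec a; rw [hab, hgsec b] at this; exact this.symm
  have hproj : Module.Projective Λ (LinearMap.range g) :=
    Module.Projective.of_equiv (LinearEquiv.ofInjective g hginj)
  have hcompl : IsCompl (LinearMap.range g) (LinearMap.ker f) := by
    constructor
    · rw [disjoint_iff]
      ext x
      simp only [Submodule.mem_inf, Submodule.mem_bot, LinearMap.mem_range, LinearMap.mem_ker]
      constructor
      · rintro ⟨⟨y, rfl⟩, hker⟩
        have hy0 : y = 0 := by
          have h1 := hgsec y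
          have h2 : (f.rangeRestrict (g y) : Λ) = f (g y) := rfl
          rw [h1, hker] at h2
          exact Subtype.ext h2
        rw [hy0, map_zero]
      · rintro rfl; exact ⟨⟨0, by simp⟩, by simp⟩
    · rw [codisjoint_iff, eq_top_iff]
      intro x _
      have hxdec : x = g (f.rangeRestrict x) + (x - g (f.rangeRestrict x)) := by abel
      rw [hxdec]
      refine Submodule.add_mem_sup ⟨_, rfl⟩ ?_
      simp only [LinearMap.mem_ker, map_sub]
      have : f (g (f.rangeRestrict x)) = f x := by
        have := hgsec (f.rangeRestrict x)
        exact congrArg Subtype.val this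
      rw [this]; exact sub_self _
  have hbot := hN (LinearMap.range g) hproj ⟨LinearMap.ker f, hcompl⟩
  ext x
  simp only [LinearMap.zero_apply]
  have hfx : (⟨f x, ⟨x, rfl⟩⟩ : LinearMap.range f) = 0 := by
    have hg0 : g ⟨f x, ⟨x, rfl⟩⟩ = 0 := by
      have : g ⟨f x, ⟨x, rfl⟩⟩ ∈ LinearMap.range g := ⟨_, rfl⟩
      rw [hbot] at this; simpa using this
    have := hgsec ⟨f x, ⟨x, rfl⟩⟩
    rw [hg0, map_zero] at this; exact this.symm
  exact congrArg Subtype.val hfx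

/-- Over a left hereditary ring, a stable module admits no nonzero map to any
projective module. -/
lemma stable_hom_to_projective_eq_zero {Λ : Type u} [Ring Λ]
    (hHered : ∀ I : Ideal Λ, Module.Projective Λ I)
    {N : Type u} [AddCommGroup N] [Module Λ N] (hN : IsStableModule Λ N)
    {Q : Type u} [AddCommGroup Q] [Module Λ Q] (hQ : Module.Projective Λ Q)
    (f : N →ₗ[Λ] Q) : f = 0 := by
  obtain ⟨s, hs⟩ := Module.projective_def.mp hQ
  ext x
  simp only [LinearMap.zero_apply]
  by_contra hfx
  have hsfx : s (f x) ≠ 0 := by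
    intro h0
    apply hfx
    have := hs (f x)
    rw [h0, map_zero] at this
    exact this.symm
  obtain ⟨a, ha⟩ : ∃ a, s (f x) a ≠ 0 := by
    by_contra h
    push_neg at h
    exact hsfx (Finsupp.ext h)
  have hzero := stable_hom_to_ring_eq_zero hHered hN
    ((Finsupp.lapply a).comp (s.comp f))
  have := congrArg (fun h => h x) hzero
  simp only [LinearMap.comp_apply, Finsupp.lapply_apply, LinearMap.zero_apply] at this
  exact ha this

/-- Over a left hereditary ring over which every module decomposes
as stable ⊕ projective, such decompositions are unique up to isomorphisms compatible
with the canonical embeddings and projections. -/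
theorem stable_projective_decomposition_unique
    (Λ : Type u) [Ring Λ]
    (hHered : ∀ I : Ideal Λ, Module.Projective Λ I)
    (hDecomp : ∀ (N : Type u) [AddCommGroup N] [Module Λ N],
      ∃ (S P : Submodule Λ N), IsCompl S P ∧ IsStableModule Λ S ∧ Module.Projective Λ P)
    (M : Type u) [AddCommGroup M] [Module Λ M]
    (S P S' P' : Submodule Λ M)
    (hc : IsCompl S P) (hc' : IsCompl S' P')
    (hS : IsStableModule Λ S) (hS' : IsStableModule Λ S')
    (hP : Module.Projective Λ P) (hP' : Module.Projective Λ P') :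
    (∃ e : S ≃ₗ[Λ] S', ∀ x : S, (e x : M) = (x : M)) ∧
      (∃ e : P ≃ₗ[Λ] P', ∀ x : M,
        e (Submodule.linearProjOfIsCompl P S hc.symm x)
          = Submodule.linearProjOfIsCompl P' S' hc'.symm x) := by
  -- Step 1: S = S'
  have key : ∀ (A B C D : Submodule Λ M), IsCompl A B → ∀ (hCD : IsCompl C D),
      IsStableModule Λ A → Module.Projective Λ D → A ≤ C := by
    intro A B C D hAB hCD hA hD x hx
    have h0 : (Submodule.linearProjOfIsCompl D C hCD.symm).comp A.subtype = 0 :=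
      stable_hom_to_projective_eq_zero hHered hA hD _
    have hx0 : Submodule.linearProjOfIsCompl D C hCD.symm x = 0 := by
      have := congrArg (fun h => h (⟨x, hx⟩ : A)) h0
      simpa using this
    exact (Submodule.linearProjOfIsCompl_apply_eq_zero_iff hCD.symm).mp hx0
  have hSS' : S = S' :=
    le_antisymm (key S P S' P' hc hc' hS hP') (key S' P' S P hc' hc hS' hP)
  constructor
  · exact ⟨LinearEquiv.ofEq S S' hSS', fun x => rfl⟩
  · set π := Submodule.linearProjOfIsCompl P S hc.symm with hπ
    set π' := Submodule.linearProjOfIsCompl P' S' hc'.symm with hπ'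
    have hπS' : ∀ x ∈ S', π x = 0 := fun x hx =>
      Submodule.projectionOnto_apply_of_mem_right hc.symm (hSS' ▸ hx)
    have hπ'S : ∀ x ∈ S, π' x = 0 := fun x hx =>
      Submodule.projectionOnto_apply_of_mem_right hc'.symm (hSS' ▸ hx)
    have hdec : ∀ x : M, (π x : M) + ((Submodule.linearProjOfIsCompl S P hc x : M)) = x := by
      intro x
      have := Submodule.projection_add_projection_eq_self hc x
      rw [add_comm]; exact this
    have hdec' : ∀ x : M, (π' x : M) + ((Submodule.linearProjOfIsCompl S' P' hc' x : M)) = x := by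
      intro x
      have := Submodule.projection_add_projection_eq_self hc' x
      rw [add_comm]; exact this
    have hππ' : ∀ x : M, π (π' x : M) = π x := by
      intro x
      have h1 := congrArg π (hdec' x)
      rw [map_add] at h1
      rw [hπS' _ (Submodule.coe_mem _)] at h1
      simpa using h1
    have hπ'π : ∀ x : M, π' (π x : M) = π' x := by
      intro x
      have h1 := congrArg π' (hdec x)
      rw [map_add] at h1
      rw [hπ'S _ (Submodule.coe_mem _)] at h1
      simpa using h1
    have hππ : ∀ x : P, π (x : M) = x :=
      fun x => Submodule.linearProjOfIsCompl_apply_left hc.symm x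
    have hπ'π' : ∀ x : P', π' (x : M) = x :=
      fun x => Submodule.linearProjOfIsCompl_apply_left hc'.symm x
    refine ⟨LinearEquiv.ofLinear (π'.comp P.subtype) (π.comp P'.subtype) ?_ ?_, ?_⟩
    · ext x
      simp only [LinearMap.comp_apply, Submodule.subtype_apply, LinearMap.id_apply]
      rw [hπ'π, hπ'π']
    · ext x
      simp only [LinearMap.comp_apply, Submodule.subtype_apply, LinearMap.id_apply]
      rw [hππ', hππ]
    · intro x
      simp only [LinearEquiv.ofLinear_apply, LinearMap.comp_apply, Submodule.subtype_apply]
      exact hπ'π x
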